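/- Fix constants β, γ, λ > 0, charger positions c_1, …, c_m ∈ ℝ² and receiver positions r_1, …, r_n ∈ ℝ² with n ≥ 1 and ‖c_j − r_i‖ > 0 for all j, i. If y ∈ [0,1]^m maximizes the total power P(x) = Σ_{i=1}^n γ‖Σ_{j=1}^m x_j E(c_j, r_i)‖² over all x ∈ [0,1]^m, then every coordinate of y equals 0 or 1; that is, in every optimal solution of MAX-POWER each charger either operates at full capacity or not at all. -/

import Mathlib

open Matrix

/-- The electric field created at receiver position `r` by a fully operational charger
at position `c`: `E(c, r) = (β/d)·(cos(2πd/λ), sin(2πd/λ))` where `d = ‖c - r‖`. -/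
noncomputable def Efield (β lam : ℝ) (c r : EuclideanSpace ℝ (Fin 2)) :
    EuclideanSpace ℝ (Fin 2) :=
  (β / ‖c - r‖) • (WithLp.equiv 2 (Fin 2 → ℝ)).symm
    ![Real.cos (2 * Real.pi * ‖c - r‖ / lam), Real.sin (2 * Real.pi * ‖c - r‖ / lam)]

lemma Efield_ne_zero (β lam : ℝ) (hβ : 0 < β) (c r : EuclideanSpace ℝ (Fin 2))
    (hd : 0 < ‖c - r‖) : Efield β lam c r ≠ 0 := by
  intro h
  have hne : β / ‖c - r‖ ≠ 0 := ne_of_gt (div_pos hβ hd)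
  rw [Efield, smul_eq_zero] at h
  rcases h with h | h
  · exact hne h
  · have h0 := congrFun (congrArg (WithLp.equiv 2 (Fin 2 → ℝ)) h) 0
    have h1 := congrFun (congrArg (WithLp.equiv 2 (Fin 2 → ℝ)) h) 1
    simp at h0 h1
    have := Real.sin_sq_add_cos_sq (2 * Real.pi * ‖c - r‖ / lam)
    rw [h0, h1] at this
    norm_num at this

/-- Every optimal solution of MAX-POWER is a 0-1 configuration: if `y ∈ [0,1]^m` maximizes
the total power `P(x) = Σᵢ γ‖Σⱼ xⱼ E(cⱼ, rᵢ)‖²`, then each charger operates at full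
capacity or not at all. -/
theorem stmt1 (β γ lam : ℝ) (hβ : 0 < β) (hγ : 0 < γ) (hlam : 0 < lam)
    (m n : ℕ) (hn : 1 ≤ n)
    (c : Fin m → EuclideanSpace ℝ (Fin 2)) (r : Fin n → EuclideanSpace ℝ (Fin 2))
    (hdist : ∀ j i, 0 < ‖c j - r i‖)
    (y : Fin m → ℝ) (hy : ∀ j, y j ∈ Set.Icc (0:ℝ) 1)
    (hmax : ∀ x : Fin m → ℝ, (∀ j, x j ∈ Set.Icc (0:ℝ) 1) →
      (∑ i, γ * ‖∑ j, x j • Efield β lam (c j) (r i)‖ ^ 2) ≤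
      (∑ i, γ * ‖∑ j, y j • Efield β lam (c j) (r i)‖ ^ 2)) :
    ∀ j, y j = 0 ∨ y j = 1 := by
  intro k
  by_contra h
  obtain ⟨hy0, hy1⟩ := not_or.mp h
  have hk0 : 0 < y k := lt_of_le_of_ne (hy k).1 (Ne.symm hy0)
  have hk1 : y k < 1 := lt_of_le_of_ne (hy k).2 hy1
  set E : Fin n → EuclideanSpace ℝ (Fin 2) := fun i => Efield β lam (c k) (r i) with hE
  set S : Fin n → EuclideanSpace ℝ (Fin 2) :=
    fun i => ∑ j ∈ Finset.univ.erase k, y j • Efield β lam (c j) (r i) with hS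
  have hsum : ∀ t : ℝ, ∀ i : Fin n,
      (∑ j, (Function.update y k t j) • Efield β lam (c j) (r i)) = S i + t • E i := by
    intro t i
    rw [← Finset.add_sum_erase _ _ (Finset.mem_univ k)]
    rw [add_comm]
    congr 1
    · apply Finset.sum_congr rfl
      intro j hj
      rw [Function.update_of_ne (Finset.ne_of_mem_erase hj)]
    · rw [Function.update_self]
  have hupd : ∀ t : ℝ, t ∈ Set.Icc (0:ℝ) 1 →
      ∀ j, Function.update y k t j ∈ Set.Icc (0:ℝ) 1 := by
    intro t ht j
    rcases eq_or_ne j k with rfl | hjk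
    · rwa [Function.update_self]
    · rw [Function.update_of_ne hjk]; exact hy j
  have hself : ∀ i : Fin n, (∑ j, y j • Efield β lam (c j) (r i)) = S i + y k • E i := by
    intro i
    have := hsum (y k) i
    rwa [Function.update_eq_self] at this
  -- quadratic expansion
  have expand : ∀ t : ℝ,
      (∑ i, γ * ‖S i + t • E i‖ ^ 2) =
      (γ * ∑ i, ‖S i‖ ^ 2) + (γ * ∑ i, 2 * inner ℝ (S i) (E i)) * t
        + (γ * ∑ i, ‖E i‖ ^ 2) * t ^ 2 := by
    intro t
    have : ∀ i : Fin n, γ * ‖S i + t • E i‖ ^ 2 =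
        γ * ‖S i‖ ^ 2 + (γ * (2 * inner ℝ (S i) (E i))) * t + (γ * ‖E i‖ ^ 2) * t ^ 2 := by
      intro i
      rw [@norm_add_sq_real, real_inner_smul_right, norm_smul, mul_pow, Real.norm_eq_abs, sq_abs]
      ring
    rw [Finset.sum_congr rfl (fun i _ => this i)]
    simp only [Finset.sum_add_distrib, Finset.sum_mul, Finset.mul_sum]
  set A : ℝ := γ * ∑ i, ‖E i‖ ^ 2 with hA
  set B : ℝ := γ * ∑ i, 2 * inner ℝ (S i) (E i) with hB
  set C : ℝ := γ * ∑ i, ‖S i‖ ^ 2 with hC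
  have hApos : 0 < A := by
    have hne : Nonempty (Fin n) := ⟨⟨0, hn⟩⟩
    apply mul_pos hγ
    apply Finset.sum_pos
    · intro i _
      have hEne : E i ≠ 0 := Efield_ne_zero β lam hβ (c k) (r i) (hdist k i)
      exact pow_pos (norm_pos_iff.mpr hEne) 2
    · exact Finset.univ_nonempty
  have h0 := hmax (Function.update y k 0) (hupd 0 (by norm_num))
  have h1 := hmax (Function.update y k 1) (hupd 1 (by norm_num))
  simp only [hsum, hself, expand] at h0 h1
  nlinarith [mul_pos hk0 (sub_pos.mpr hk1), mul_pos hApos (mul_pos hk0 (sub_pos.mpr hk1))]
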